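/- For every inverse temperature β ∈ ℝ, Hermitian d×d Hamiltonians H₁ and H₂ (H₂ having orthonormal eigenbasis (|m⟩₂)), Gibbs state ρ₁ = exp(−βH₁)/Tr[exp(−βH₁)], unitaries U, V, and unital quantum channel Φ, the dephased (monitored) quantum unital Otto cycle obeys β(Tr[V Δ₂(Φ(Δ₂(U ρ₁ U†))) V† H₁] − Tr[ρ₁ H₁]) ≥ 0, where Δ₂ is the complete dephasing channel in the eigenbasis of H₂. In particular, for β ≥ 0 the dephased average heat released ⟨⟨Q_C⟩⟩ := Tr[ρ₁ H₁] − Tr[V Δ₂(Φ(Δ₂(U ρ₁ U†))) V† H₁] satisfies ⟨⟨Q_C⟩⟩ ≤ 0, so the dephased cycle can never work as a refrigerator, for any finite dimension d. -/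

import Mathlib

open Matrix Finset

/-- Elementary classical core: for a doubly-stochastic matrix `c` and Gibbs weights
`exp (-β E i)`, the dephased average energy change is nonnegative after multiplying by `β`. -/
lemma core_gibbs {d : ℕ} (c : Fin d → Fin d → ℝ)
    (hc : ∀ j i, 0 ≤ c j i) (hrow : ∀ j, ∑ i, c j i = 1) (hcol : ∀ i, ∑ j, c j i = 1)
    (E : Fin d → ℝ) (β : ℝ) :
    0 ≤ β * ((∑ j, ∑ i, c j i * Real.exp (-(β * E i)) * E j)
        - ∑ i, Real.exp (-(β * E i)) * E i) ∧
      (0 ≤ β → ∑ i, Real.exp (-(β * E i)) * E i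
        ≤ ∑ j, ∑ i, c j i * Real.exp (-(β * E i)) * E j) := by
  set p : Fin d → ℝ := fun i => Real.exp (-(β * E i)) with hp
  have hpj : ∀ j i, p i * Real.exp (-(β * E j - β * E i)) = p j := by
    intro j i
    rw [hp, ← Real.exp_add]
    congr 1; ring
  have hterm : ∀ j i, p i - p j ≤ p i * (β * E j - β * E i) := by
    intro j i
    have h1 : 1 - (β * E j - β * E i) ≤ Real.exp (-(β * E j - β * E i)) := by
      have := Real.add_one_le_exp (-(β * E j - β * E i)); linarith
    have h2 := mul_le_mul_of_nonneg_left h1 (Real.exp_pos (-(β * E i))).le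
    have h3 := hpj j i
    simp only [hp] at h2 h3 ⊢
    nlinarith
  have key : 0 ≤ ∑ j, ∑ i, c j i * (p i * (β * E j - β * E i)) := by
    have hzero : ∑ j, ∑ i, c j i * (p i - p j) = 0 := by
      have e1 : ∑ j, ∑ i, c j i * p i = ∑ i, p i := by
        rw [Finset.sum_comm]
        refine Finset.sum_congr rfl fun i _ => ?_
        rw [← Finset.sum_mul, hcol, one_mul]
      have e2 : ∑ j, ∑ i, c j i * p j = ∑ j, p j := by
        refine Finset.sum_congr rfl fun j _ => ?_
        rw [← Finset.sum_mul, hrow, one_mul]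
      simp only [mul_sub, Finset.sum_sub_distrib]
      rw [e1, e2, sub_self]
    calc (0:ℝ) = ∑ j, ∑ i, c j i * (p i - p j) := hzero.symm
      _ ≤ ∑ j, ∑ i, c j i * (p i * (β * E j - β * E i)) := by
          refine Finset.sum_le_sum fun j _ => Finset.sum_le_sum fun i _ => ?_
          exact mul_le_mul_of_nonneg_left (hterm j i) (hc j i)
  have first : 0 ≤ β * ((∑ j, ∑ i, c j i * p i * E j) - ∑ i, p i * E i) := by
    have hrw : β * ((∑ j, ∑ i, c j i * p i * E j) - ∑ i, p i * E i)
        = ∑ j, ∑ i, c j i * (p i * (β * E j - β * E i)) := by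
      have e1 : ∑ i, p i * E i = ∑ j, ∑ i, c j i * (p i * E i) := by
        rw [Finset.sum_comm]
        refine Finset.sum_congr rfl fun i _ => ?_
        rw [← Finset.sum_mul, hcol, one_mul]
      rw [e1, mul_sub]
      simp only [Finset.mul_sum, ← Finset.sum_sub_distrib]
      exact Finset.sum_congr rfl fun j _ => Finset.sum_congr rfl fun i _ => by ring
    rw [hrw]; exact key
  refine ⟨first, fun hβ => ?_⟩
  rcases eq_or_lt_of_le hβ with h0 | h0
  · simp only [hp, ← h0, zero_mul, neg_zero, Real.exp_zero, one_mul, mul_one]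
    refine le_of_eq ?_
    rw [eq_comm]
    calc ∑ j, ∑ i, c j i * E j = ∑ j, E j := by
          refine Finset.sum_congr rfl fun j _ => ?_
          rw [← Finset.sum_mul, hrow, one_mul]
      _ = ∑ i, E i := rfl
  · nlinarith [first]

/-- A unital, trace-preserving Kraus representation. -/
def IsUK {d : ℕ} (f : Matrix (Fin d) (Fin d) ℂ → Matrix (Fin d) (Fin d) ℂ) : Prop :=
  ∃ (ι : Type) (s : Finset ι) (A : ι → Matrix (Fin d) (Fin d) ℂ),
    (∑ i ∈ s, (A i)ᴴ * A i = 1) ∧ (∑ i ∈ s, A i * (A i)ᴴ = 1) ∧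
      ∀ X, f X = ∑ i ∈ s, A i * X * (A i)ᴴ

lemma IsUK.comp {d : ℕ} {f g : Matrix (Fin d) (Fin d) ℂ → Matrix (Fin d) (Fin d) ℂ}
    (hf : IsUK f) (hg : IsUK g) : IsUK (fun X => f (g X)) := by
  obtain ⟨ι, s, A, hA1, hA2, hAf⟩ := hf
  obtain ⟨κ, t, B, hB1, hB2, hBg⟩ := hg
  refine ⟨ι × κ, s ×ˢ t, fun q => A q.1 * B q.2, ?_, ?_, ?_⟩
  · rw [Finset.sum_product]
    calc ∑ i ∈ s, ∑ j ∈ t, (A i * B j)ᴴ * (A i * B j)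
        = ∑ j ∈ t, ∑ i ∈ s, (B j)ᴴ * ((A i)ᴴ * A i) * B j := by
          rw [Finset.sum_comm]
          exact Finset.sum_congr rfl fun j _ => Finset.sum_congr rfl fun i _ => by
            simp [conjTranspose_mul, mul_assoc]
      _ = ∑ j ∈ t, (B j)ᴴ * (∑ i ∈ s, (A i)ᴴ * A i) * B j := by
          refine Finset.sum_congr rfl fun j _ => ?_
          rw [Finset.mul_sum, Finset.sum_mul]
      _ = 1 := by rw [hA1]; simpa using hB1
  · rw [Finset.sum_product]
    calc ∑ i ∈ s, ∑ j ∈ t, (A i * B j) * (A i * B j)ᴴ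
        = ∑ i ∈ s, ∑ j ∈ t, A i * (B j * (B j)ᴴ) * (A i)ᴴ := by
          exact Finset.sum_congr rfl fun i _ => Finset.sum_congr rfl fun j _ => by
            simp [conjTranspose_mul, mul_assoc]
      _ = ∑ i ∈ s, A i * (∑ j ∈ t, B j * (B j)ᴴ) * (A i)ᴴ := by
          refine Finset.sum_congr rfl fun i _ => ?_
          rw [Finset.mul_sum, Finset.sum_mul]
      _ = 1 := by rw [hB2]; simpa using hA2
  · intro X
    show f (g X) = _
    rw [hAf, hBg, Finset.sum_product]
    refine Finset.sum_congr rfl fun i _ => ?_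
    rw [Finset.mul_sum, Finset.sum_mul]
    refine Finset.sum_congr rfl fun j _ => ?_
    simp [conjTranspose_mul, mul_assoc]

lemma isUK_conj {d : ℕ} (U : Matrix (Fin d) (Fin d) ℂ)
    (hU : Uᴴ * U = 1) (hU' : U * Uᴴ = 1) : IsUK (fun X => U * X * Uᴴ) :=
  ⟨Unit, {()}, fun _ => U, by simpa using hU, by simpa using hU', fun X => by simp⟩

lemma dephase_sums {d : ℕ}
    (g : Fin d → (Fin d → ℂ))
    (hg : ∀ m m', star (g m) ⬝ᵥ g m' = if m = m' then 1 else 0)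
    (P : Fin d → Matrix (Fin d) (Fin d) ℂ)
    (hP : ∀ m, P m = vecMulVec (g m) (star (g m))) :
    (∀ m, (P m)ᴴ = P m) ∧ ((∑ m, (P m)ᴴ * P m = 1) ∧ (∑ m, P m * (P m)ᴴ = 1)) := by
  have hherm : ∀ m, (P m)ᴴ = P m := by
    intro m
    ext i j
    simp [hP, conjTranspose_apply, vecMulVec_apply, mul_comm]
  have hidem : ∀ m, P m * P m = P m := by
    intro m
    have hm := hg m m
    simp only [if_pos rfl] at hm
    ext i j
    simp only [hP, mul_apply, vecMulVec_apply, Pi.star_apply]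
    calc ∑ k, g m i * star (g m k) * (g m k * star (g m j))
        = (∑ k, star (g m k) * g m k) * (g m i * star (g m j)) := by
          rw [Finset.sum_mul]
          exact Finset.sum_congr rfl fun k _ => by ring
      _ = g m i * star (g m j) := by
          rw [show (∑ k, star (g m k) * g m k) = (1:ℂ) from hm, one_mul]
  have hsum : ∑ m, P m = 1 := by
    let N : Matrix (Fin d) (Fin d) ℂ := Matrix.of fun m i => star (g m i)
    have hN : N * Nᴴ = 1 := by
      ext m m'
      have := hg m m'
      simp only [mul_apply, conjTranspose_apply, Matrix.of_apply, star_star, N]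
      simpa [dotProduct, one_apply] using this
    have hN' : Nᴴ * N = 1 := mul_eq_one_comm.mp hN
    ext i j
    have := congrFun (congrFun hN' i) j
    simp only [mul_apply, conjTranspose_apply, Matrix.of_apply, star_star, N] at this
    simp only [Matrix.sum_apply, hP, vecMulVec_apply, Pi.star_apply]
    rw [← this]
  refine ⟨hherm, ?_, ?_⟩
  · calc ∑ m, (P m)ᴴ * P m = ∑ m, P m := by
          exact Finset.sum_congr rfl fun m _ => by rw [hherm, hidem]
      _ = 1 := hsum
  · calc ∑ m, P m * (P m)ᴴ = ∑ m, P m := by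
          exact Finset.sum_congr rfl fun m _ => by rw [hherm, hidem]
      _ = 1 := hsum

/-- Unfolding of the trace of a Kraus-evolved rotated Gibbs state against a rotated
diagonal Hamiltonian, in terms of an explicit doubly-stochastic matrix. -/
lemma kraus_trace {d : ℕ} {ι : Type} (s : Finset ι) (W : Matrix (Fin d) (Fin d) ℂ)
    (hW : Wᴴ * W = 1) (hW' : W * Wᴴ = 1)
    (L : ι → Matrix (Fin d) (Fin d) ℂ)
    (hL : ∑ l ∈ s, (L l)ᴴ * L l = 1) (hL' : ∑ l ∈ s, L l * (L l)ᴴ = 1)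
    (p E : Fin d → ℝ) :
    ∃ c : Fin d → Fin d → ℝ,
      (∀ j i, 0 ≤ c j i) ∧ (∀ j, ∑ i, c j i = 1) ∧ (∀ i, ∑ j, c j i = 1) ∧
      ((∑ l ∈ s, L l * (W * diagonal (fun i => (p i : ℂ)) * Wᴴ) * (L l)ᴴ) *
          (W * diagonal (fun i => (E i : ℂ)) * Wᴴ)).trace
        = ((∑ j, ∑ i, c j i * p i * E j : ℝ) : ℂ) := by
  set B : ι → Matrix (Fin d) (Fin d) ℂ := fun l => Wᴴ * L l * W with hB
  have hBH : ∀ l, (B l)ᴴ = Wᴴ * (L l)ᴴ * W := by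
    intro l; simp [hB, conjTranspose_mul, mul_assoc]
  refine ⟨fun j i => ∑ l ∈ s, Complex.normSq (B l j i),
    fun j i => Finset.sum_nonneg fun l _ => Complex.normSq_nonneg _, ?_, ?_, ?_⟩
  · -- row sums
    intro j
    have hBB' : ∑ l ∈ s, B l * (B l)ᴴ = 1 := by
      calc ∑ l ∈ s, B l * (B l)ᴴ = ∑ l ∈ s, Wᴴ * (L l * (L l)ᴴ) * W := by
            refine Finset.sum_congr rfl fun l _ => ?_
            rw [hBH]
            simp only [hB, mul_assoc]
            rw [← mul_assoc W Wᴴ, hW', one_mul]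
        _ = Wᴴ * (∑ l ∈ s, L l * (L l)ᴴ) * W := by rw [Finset.mul_sum, Finset.sum_mul]
        _ = 1 := by rw [hL', mul_one, hW]
    have h1 := congrFun (congrFun hBB' j) j
    simp only [Matrix.sum_apply, mul_apply, conjTranspose_apply, one_apply_eq] at h1
    have h2 : ((∑ i, ∑ l ∈ s, Complex.normSq (B l j i) : ℝ) : ℂ) = 1 := by
      push_cast
      rw [← h1, Finset.sum_comm]
      refine Finset.sum_congr rfl fun l _ => Finset.sum_congr rfl fun i _ => ?_
      simp [Complex.star_def, Complex.mul_conj, Complex.mul_conj', mul_comm]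
    exact_mod_cast h2
  · -- column sums
    intro i
    have hBB : ∑ l ∈ s, (B l)ᴴ * B l = 1 := by
      calc ∑ l ∈ s, (B l)ᴴ * B l = ∑ l ∈ s, Wᴴ * ((L l)ᴴ * L l) * W := by
            refine Finset.sum_congr rfl fun l _ => ?_
            rw [hBH]
            simp only [hB, mul_assoc]
            rw [← mul_assoc W Wᴴ, hW', one_mul]
        _ = Wᴴ * (∑ l ∈ s, (L l)ᴴ * L l) * W := by rw [Finset.mul_sum, Finset.sum_mul]
        _ = 1 := by rw [hL, mul_one, hW]
    have h1 := congrFun (congrFun hBB i) i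
    simp only [Matrix.sum_apply, mul_apply, conjTranspose_apply, one_apply_eq] at h1
    have h2 : ((∑ j, ∑ l ∈ s, Complex.normSq (B l j i) : ℝ) : ℂ) = 1 := by
      push_cast
      rw [← h1, Finset.sum_comm]
      refine Finset.sum_congr rfl fun l _ => Finset.sum_congr rfl fun j _ => ?_
      simp [Complex.star_def, Complex.mul_conj, Complex.mul_conj', mul_comm]
    exact_mod_cast h2
  · -- trace
    have hmain : ∀ l ∈ s,
        (L l * (W * diagonal (fun i => (p i : ℂ)) * Wᴴ) * (L l)ᴴ *
          (W * diagonal (fun i => (E i : ℂ)) * Wᴴ)).trace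
        = ∑ j, ∑ i, (Complex.normSq (B l j i) : ℂ) * (p i : ℂ) * (E j : ℂ) := by
      intro l _
      have hconj : B l * diagonal (fun i => (p i : ℂ)) * (B l)ᴴ * diagonal (fun i => (E i : ℂ))
          = Wᴴ * (L l * (W * diagonal (fun i => (p i : ℂ)) * Wᴴ) * (L l)ᴴ *
              (W * diagonal (fun i => (E i : ℂ)) * Wᴴ)) * W := by
        rw [hBH]
        simp only [hB, mul_assoc]
        rw [hW, mul_one]
      have htr1 : (L l * (W * diagonal (fun i => (p i : ℂ)) * Wᴴ) * (L l)ᴴ *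
          (W * diagonal (fun i => (E i : ℂ)) * Wᴴ)).trace
          = (B l * diagonal (fun i => (p i : ℂ)) * (B l)ᴴ * diagonal (fun i => (E i : ℂ))).trace := by
        have tconj : ∀ X : Matrix (Fin d) (Fin d) ℂ, (Wᴴ * X * W).trace = X.trace := by
          intro X; rw [trace_mul_cycle, hW', one_mul]
        rw [hconj, tconj]
      rw [htr1]
      have hdiagE : ∀ (M : Matrix (Fin d) (Fin d) ℂ) (v : Fin d → ℂ),
          (M * diagonal v).trace = ∑ j, M j j * v j := by
        intro M v
        simp [Matrix.trace, Matrix.diag, mul_apply, diagonal]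
      rw [hdiagE]
      refine Finset.sum_congr rfl fun j _ => ?_
      have hentry : (B l * diagonal (fun i => (p i : ℂ)) * (B l)ᴴ) j j
          = ∑ i, B l j i * (p i : ℂ) * star (B l j i) := by
        simp [mul_apply, conjTranspose_apply, diagonal, Finset.sum_mul]
      rw [hentry, Finset.sum_mul]
      refine Finset.sum_congr rfl fun i _ => ?_
      rw [mul_right_comm (B l j i), Complex.star_def, Complex.mul_conj]
    rw [Finset.sum_mul, trace_sum, Finset.sum_congr rfl hmain]
    push_cast
    rw [Finset.sum_comm]
    refine Finset.sum_congr rfl fun j _ => ?_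
    rw [Finset.sum_comm]
    refine Finset.sum_congr rfl fun i _ => ?_
    simp [Finset.sum_mul]

/-- For every inverse temperature `β ∈ ℝ`, Hermitian Hamiltonians `H₁`, `H₂`
(the latter with orthonormal eigenbasis `g m`, eigenvalues `ν₂ m` and spectral
projectors `P m = |g m⟩⟨g m|`), Gibbs state `ρ₁ = exp (−β H₁) / Tr (exp (−β H₁))`, unitaries
`U, V` and unital quantum channel `Φ`, the dephased (monitored) quantum unital Otto cycle obeys
`β (Tr[V Δ₂(Φ(Δ₂(U ρ₁ Uᴴ))) Vᴴ H₁] − Tr[ρ₁ H₁]) ≥ 0`, where `Δ₂ X = ∑ m, P m * X * P m` is the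
complete dephasing channel in the eigenbasis of `H₂`.  In particular, for `β ≥ 0` the dephased
average heat released `⟨⟨Q_C⟩⟩ := Tr[ρ₁ H₁] − Tr[V Δ₂(Φ(Δ₂(U ρ₁ Uᴴ))) Vᴴ H₁]` satisfies
`⟨⟨Q_C⟩⟩ ≤ 0`: the dephased cycle can never work as a refrigerator, in any finite dimension. -/
theorem dephased_no_refrigerator
    {d : ℕ} (hd : 1 ≤ d) (β : ℝ)
    (H₁ H₂ : Matrix (Fin d) (Fin d) ℂ) (hH₁ : H₁.IsHermitian) (hH₂ : H₂.IsHermitian)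
    (g : Fin d → (Fin d → ℂ))
    (hg : ∀ m m', star (g m) ⬝ᵥ g m' = if m = m' then 1 else 0)
    (ν₂ : Fin d → ℝ)
    (P : Fin d → Matrix (Fin d) (Fin d) ℂ)
    (hP : ∀ m, P m = vecMulVec (g m) (star (g m)))
    (hspec : H₂ = ∑ m, (ν₂ m : ℂ) • P m)
    (Δ₂ : Matrix (Fin d) (Fin d) ℂ → Matrix (Fin d) (Fin d) ℂ)
    (hΔ₂ : ∀ X, Δ₂ X = ∑ m, P m * X * P m)
    (ρ₁ : Matrix (Fin d) (Fin d) ℂ)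
    (hρ₁ : ρ₁ = ((NormedSpace.exp (-(β : ℂ) • H₁)).trace)⁻¹ •
        NormedSpace.exp (-(β : ℂ) • H₁))
    (U V : Matrix (Fin d) (Fin d) ℂ)
    (hU : Uᴴ * U = 1) (hU' : U * Uᴴ = 1)
    (hV : Vᴴ * V = 1) (hV' : V * Vᴴ = 1)
    {K : ℕ} (Kr : Fin K → Matrix (Fin d) (Fin d) ℂ)
    (hKr : ∑ k, (Kr k)ᴴ * Kr k = 1) (hKr' : ∑ k, Kr k * (Kr k)ᴴ = 1)
    (Φ : Matrix (Fin d) (Fin d) ℂ → Matrix (Fin d) (Fin d) ℂ)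
    (hΦ : ∀ X, Φ X = ∑ k, Kr k * X * (Kr k)ᴴ) :
    0 ≤ β * (((V * Δ₂ (Φ (Δ₂ (U * ρ₁ * Uᴴ))) * Vᴴ * H₁).trace).re - ((ρ₁ * H₁).trace).re) ∧
      (0 ≤ β →
        ((ρ₁ * H₁).trace).re - ((V * Δ₂ (Φ (Δ₂ (U * ρ₁ * Uᴴ))) * Vᴴ * H₁).trace).re ≤ 0) := by
  -- the composite map is a unital trace-preserving Kraus map
  obtain ⟨hPherm, hPsum1, hPsum2⟩ := dephase_sums g hg P hP
  have hΔ₂' : ∀ X, Δ₂ X = ∑ m, P m * X * (P m)ᴴ := by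
    intro X
    rw [hΔ₂]
    exact Finset.sum_congr rfl fun m _ => by rw [hPherm]
  have hUKΔ : IsUK Δ₂ := ⟨Fin d, Finset.univ, P, hPsum1, hPsum2, hΔ₂'⟩
  have hUKΦ : IsUK Φ := ⟨Fin K, Finset.univ, Kr, hKr, hKr', hΦ⟩
  have hΨ : IsUK (fun X => V * Δ₂ (Φ (Δ₂ (U * X * Uᴴ))) * Vᴴ) :=
    ((((isUK_conj V hV hV').comp hUKΔ).comp hUKΦ).comp hUKΔ).comp (isUK_conj U hU hU')
  obtain ⟨ι, s, Lf, hL1, hL2, hLf⟩ := hΨ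
  -- spectral decomposition of H₁
  set W : Matrix (Fin d) (Fin d) ℂ := (hH₁.eigenvectorUnitary : Matrix (Fin d) (Fin d) ℂ)
    with hWdef
  set Ev : Fin d → ℝ := hH₁.eigenvalues with hEv
  have hmem := hH₁.eigenvectorUnitary.2
  have hW : Wᴴ * W = 1 := by
    rw [← Matrix.star_eq_conjTranspose]
    exact (Matrix.mem_unitaryGroup_iff'.mp hmem)
  have hW' : W * Wᴴ = 1 := by
    rw [← Matrix.star_eq_conjTranspose]
    exact (Matrix.mem_unitaryGroup_iff.mp hmem)
  have hdiag : H₁ = W * diagonal (fun i => ((Ev i : ℝ) : ℂ)) * Wᴴ := by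
    have := hH₁.spectral_theorem
    simp only [Unitary.conjStarAlgAut_apply, Unitary.coe_star] at this
    rw [← Matrix.star_eq_conjTranspose] at *
    convert this using 2
    all_goals rfl
  have hWinv : W⁻¹ = Wᴴ := Matrix.inv_eq_left_inv hW
  have hUnit : IsUnit W := by
    letI := invertibleOfRightInverse W Wᴴ hW'
    exact isUnit_of_invertible W
  have hexp : NormedSpace.exp (-(β : ℂ) • H₁)
      = W * diagonal (fun i => ((Real.exp (-(β * Ev i)) : ℝ) : ℂ)) * Wᴴ := by
    have h0 : -(β : ℂ) • H₁ = W * diagonal (fun i => ((-(β * Ev i) : ℝ) : ℂ)) * Wᴴ := by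
      calc -(β : ℂ) • H₁
          = -(β:ℂ) • (W * diagonal (fun i => ((Ev i : ℝ) : ℂ)) * Wᴴ) := by
            rw [← hdiag]
        _ = W * (-(β:ℂ) • diagonal (fun i => ((Ev i : ℝ) : ℂ))) * Wᴴ := by
            rw [mul_smul_comm, smul_mul_assoc]
        _ = W * diagonal (fun i => ((-(β * Ev i) : ℝ) : ℂ)) * Wᴴ := by
            have hv : -(β:ℂ) • (fun i => ((Ev i : ℝ) : ℂ))
                = fun i => ((-(β * Ev i) : ℝ) : ℂ) := by
              funext i
              simp only [Pi.smul_apply, smul_eq_mul]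
              push_cast
              ring
            rw [← diagonal_smul, hv]
    rw [h0, ← hWinv, Matrix.exp_conj W _ hUnit, Matrix.exp_diagonal, hWinv, Pi.exp_def]
    have hfun : (fun i => NormedSpace.exp (((-(β * Ev i) : ℝ)) : ℂ))
        = fun i => ((Real.exp (-(β * Ev i)) : ℝ) : ℂ) := by
      funext i
      rw [← Complex.exp_eq_exp_ℂ]
      exact (Complex.ofReal_exp _).symm
    rw [hfun]
  -- the partition function
  set Z : ℝ := ∑ i, Real.exp (-(β * Ev i)) with hZ
  have hZpos : 0 < Z := by
    have : Nonempty (Fin d) := ⟨⟨0, hd⟩⟩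
    exact Finset.sum_pos (fun i _ => Real.exp_pos _) Finset.univ_nonempty
  have htrZ : (NormedSpace.exp (-(β : ℂ) • H₁)).trace = (Z : ℂ) := by
    rw [hexp, trace_mul_cycle, hW, one_mul, trace_diagonal, hZ]
    norm_cast
  have hρ : ρ₁ = (Z:ℂ)⁻¹ • (W * diagonal (fun i => ((Real.exp (-(β * Ev i)) : ℝ) : ℂ)) * Wᴴ) := by
    rw [hρ₁, htrZ, hexp]
  -- the doubly stochastic matrix
  obtain ⟨c, hc, hrow, hcol, htr⟩ :=
    kraus_trace s W hW hW' Lf hL1 hL2 (fun i => Real.exp (-(β * Ev i))) Ev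
  -- the two traces
  have hTgt : (V * Δ₂ (Φ (Δ₂ (U * ρ₁ * Uᴴ))) * Vᴴ * H₁).trace
      = (Z:ℂ)⁻¹ * ((∑ j, ∑ i, c j i * Real.exp (-(β * Ev i)) * Ev j : ℝ) : ℂ) := by
    have h1 : V * Δ₂ (Φ (Δ₂ (U * ρ₁ * Uᴴ))) * Vᴴ = ∑ l ∈ s, Lf l * ρ₁ * (Lf l)ᴴ := hLf ρ₁
    have h2 : ∑ l ∈ s, Lf l * ρ₁ * (Lf l)ᴴ
        = (Z:ℂ)⁻¹ • ∑ l ∈ s, Lf l *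
            (W * diagonal (fun i => ((Real.exp (-(β * Ev i)) : ℝ) : ℂ)) * Wᴴ) * (Lf l)ᴴ := by
      rw [hρ, Finset.smul_sum]
      exact Finset.sum_congr rfl fun l _ => by rw [mul_smul_comm, smul_mul_assoc]
    rw [h1, h2, hdiag, smul_mul_assoc, trace_smul, smul_eq_mul, htr]
  have hT : (ρ₁ * H₁).trace = (Z:ℂ)⁻¹ * ((∑ i, Real.exp (-(β * Ev i)) * Ev i : ℝ) : ℂ) := by
    rw [hρ, hdiag, smul_mul_assoc, trace_smul, smul_eq_mul]
    refine congrArg _ ?_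
    have hmid : W * diagonal (fun i => ((Real.exp (-(β * Ev i)) : ℝ) : ℂ)) * Wᴴ *
        (W * diagonal (fun i => ((Ev i : ℝ) : ℂ)) * Wᴴ)
        = W * (diagonal (fun i => ((Real.exp (-(β * Ev i)) : ℝ) : ℂ)) *
            diagonal (fun i => ((Ev i : ℝ) : ℂ))) * Wᴴ := by
      simp only [mul_assoc]
      rw [← mul_assoc Wᴴ W, hW, one_mul]
    rw [hmid, trace_mul_cycle, hW, one_mul, diagonal_mul_diagonal, trace_diagonal]
    norm_cast
  -- extract real parts
  have hre1 : ((V * Δ₂ (Φ (Δ₂ (U * ρ₁ * Uᴴ))) * Vᴴ * H₁).trace).re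
      = Z⁻¹ * (∑ j, ∑ i, c j i * Real.exp (-(β * Ev i)) * Ev j) := by
    rw [hTgt, ← Complex.ofReal_inv, ← Complex.ofReal_mul, Complex.ofReal_re]
  have hre2 : ((ρ₁ * H₁).trace).re = Z⁻¹ * (∑ i, Real.exp (-(β * Ev i)) * Ev i) := by
    rw [hT, ← Complex.ofReal_inv, ← Complex.ofReal_mul, Complex.ofReal_re]
  obtain ⟨hcore1, hcore2⟩ := core_gibbs c hc hrow hcol Ev β
  have hZinv : (0:ℝ) ≤ Z⁻¹ := inv_nonneg.mpr hZpos.le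
  constructor
  · rw [hre1, hre2]
    have hrw : β * (Z⁻¹ * (∑ j, ∑ i, c j i * Real.exp (-(β * Ev i)) * Ev j)
        - Z⁻¹ * (∑ i, Real.exp (-(β * Ev i)) * Ev i))
        = Z⁻¹ * (β * ((∑ j, ∑ i, c j i * Real.exp (-(β * Ev i)) * Ev j)
            - ∑ i, Real.exp (-(β * Ev i)) * Ev i)) := by ring
    rw [hrw]
    exact mul_nonneg hZinv hcore1
  · intro hβ
    rw [hre1, hre2]
    have h := hcore2 hβ
    nlinarith
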